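/- Let Ω ⊆ ℝ^{2n} be a centrally symmetric convex body (compact convex, Ω = −Ω, with 0 in its interior) and F a linear subspace of ℝ^{2n}. Let Π_F and Π_{J(F)} denote the orthogonal projections onto F and onto J(F) respectively. Then (Π_F Ω)^{ℏ,σ,J(F)} = Ω^{ℏ,σ} ∩ J(F) and (Ω ∩ F)^{ℏ,σ,J(F)} = Π_{J(F)}(Ω^{ℏ,σ}). -/

import Mathlib

open MeasureTheory Real Metric
open scoped RealInnerProductSpace Pointwise

noncomputable section

/-- `ℝⁿ` with its Euclidean structure. -/
abbrev En (n : ℕ) := EuclideanSpace ℝ (Fin n)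

/-- The phase space `ℝ²ⁿ = ℝⁿ × ℝⁿ` with its Euclidean structure, the first block of
coordinates being the positions `x` and the second block the momenta `p`. -/
abbrev PS (n : ℕ) := EuclideanSpace ℝ (Fin n ⊕ Fin n)

/-- The standard symplectic matrix `J = [[0, I], [-I, 0]]`. -/
def Jmat (n : ℕ) : Matrix (Fin n ⊕ Fin n) (Fin n ⊕ Fin n) ℝ :=
  Matrix.fromBlocks 0 1 (-1) 0

/-- The standard symplectic form `σ(z, z') = ⟨Jz, z'⟩`. -/
def symp (n : ℕ) (z z' : PS n) : ℝ := ⟪(Matrix.toEuclideanLin (Jmat n)) z, z'⟫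

/-- The quadratic form `z ↦ ⟨Mz, z⟩`. -/
def qf {m : Type*} [Fintype m] [DecidableEq m] (M : Matrix m m ℝ)
    (z : EuclideanSpace ℝ m) : ℝ := ⟪(Matrix.toEuclideanLin M) z, z⟫

/-- The symplectic `ℏ`-polar dual `Ω^{ℏ,σ} = {z' : ∀ z ∈ Ω, σ(z, z') ≤ ℏ}`. -/
def sympDual (n : ℕ) (ℏ : ℝ) (Ω : Set (PS n)) : Set (PS n) :=
  {z' | ∀ z ∈ Ω, symp n z z' ≤ ℏ}

/-- A linear automorphism of `ℝ²ⁿ` is symplectic if it preserves the symplectic form. -/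
def IsSymplectic {n : ℕ} (S : PS n ≃ₗ[ℝ] PS n) : Prop :=
  ∀ z z', symp n (S z) (S z') = symp n z z'

/-- The symplectic `ℏ`-polar dual of `Y` taken inside the subspace `G`:
`Y^{ℏ,σ,G} = {z' ∈ G : ∀ z ∈ Y, σ(z, z') ≤ ℏ}`. -/
def sympDualIn (n : ℕ) (ℏ : ℝ) (G : Submodule ℝ (PS n)) (Y : Set (PS n)) : Set (PS n) :=
  {z' | z' ∈ G ∧ ∀ z ∈ Y, symp n z z' ≤ ℏ}

/-! ### Auxiliary lemmas about `J` -/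

lemma Jmat_mul_Jmat (n : ℕ) : Jmat n * Jmat n = -1 := by
  rw [Jmat, Matrix.fromBlocks_multiply]
  simp [← Matrix.fromBlocks_one, Matrix.fromBlocks_neg]

lemma Jmat_conjT (n : ℕ) : (Jmat n).conjTranspose = -(Jmat n) := by
  rw [Jmat, Matrix.fromBlocks_conjTranspose]
  simp [Matrix.fromBlocks_neg]

lemma J_J (n : ℕ) (x : PS n) :
    Matrix.toEuclideanLin (Jmat n) (Matrix.toEuclideanLin (Jmat n) x) = -x := by
  have h : Matrix.toEuclideanLin (Jmat n * Jmat n) x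
      = Matrix.toEuclideanLin (Jmat n) (Matrix.toEuclideanLin (Jmat n) x) := by
    rw [Matrix.toEuclideanLin_eq_toLin, Matrix.toLin_mul _ (PiLp.basisFun 2 ℝ _) _]
    rfl
  rw [← h, Jmat_mul_Jmat, map_neg]
  simp [Matrix.toEuclideanLin_eq_toLin]

lemma inner_J_left (n : ℕ) (x y : PS n) :
    ⟪Matrix.toEuclideanLin (Jmat n) x, y⟫ = -⟪x, Matrix.toEuclideanLin (Jmat n) y⟫ := by
  have h := LinearMap.adjoint_inner_right (Matrix.toEuclideanLin (Jmat n)) y x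
  rw [← Matrix.toEuclideanLin_conjTranspose_eq_adjoint, Jmat_conjT, map_neg,
    LinearMap.neg_apply, inner_neg_right] at h
  linarith [real_inner_comm x ((Matrix.toEuclideanLin (Jmat n)) y),
    real_inner_comm ((Matrix.toEuclideanLin (Jmat n)) x) y, h]

lemma inner_J_J (n : ℕ) (x y : PS n) :
    ⟪Matrix.toEuclideanLin (Jmat n) x, Matrix.toEuclideanLin (Jmat n) y⟫ = ⟪x, y⟫ := by
  rw [inner_J_left, J_J]
  simp

lemma norm_J (n : ℕ) (x : PS n) : ‖Matrix.toEuclideanLin (Jmat n) x‖ = ‖x‖ := by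
  have h := inner_J_J n x x
  rw [real_inner_self_eq_norm_mul_norm, real_inner_self_eq_norm_mul_norm] at h
  exact (mul_self_inj (norm_nonneg _) (norm_nonneg _)).mp h

set_option maxHeartbeats 1000000 in
/-- symplectic polar duality exchanges orthogonal projections and
intersections: `(Π_F Ω)^{ℏ,σ,J(F)} = Ω^{ℏ,σ} ∩ J(F)` and
`(Ω ∩ F)^{ℏ,σ,J(F)} = Π_{J(F)}(Ω^{ℏ,σ})` for a centrally symmetric convex body `Ω`. -/
theorem stmt5 (n : ℕ) (ℏ : ℝ) (hℏ : 0 < ℏ) (Ω : Set (PS n))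
    (hc : IsCompact Ω) (hconv : Convex ℝ Ω) (hsym : Ω = -Ω)
    (h0 : (0 : PS n) ∈ interior Ω)
    (F : Submodule ℝ (PS n)) :
    sympDualIn n ℏ (F.map (Matrix.toEuclideanLin (Jmat n)))
        ((fun z => (Submodule.orthogonalProjectionOnto F z : PS n)) '' Ω)
      = sympDual n ℏ Ω ∩ ((F.map (Matrix.toEuclideanLin (Jmat n)) : Submodule ℝ (PS n)) : Set (PS n)) ∧
    sympDualIn n ℏ (F.map (Matrix.toEuclideanLin (Jmat n))) (Ω ∩ (F : Set (PS n)))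
      = (fun z => (Submodule.orthogonalProjectionOnto (F.map (Matrix.toEuclideanLin (Jmat n))) z : PS n)) ''
          sympDual n ℏ Ω := by
  set G := F.map (Matrix.toEuclideanLin (Jmat n)) with hGdef
  have key1 : ∀ (z w : PS n), w ∈ F →
      symp n ((Submodule.orthogonalProjectionOnto F z : PS n)) (Matrix.toEuclideanLin (Jmat n) w)
        = symp n z (Matrix.toEuclideanLin (Jmat n) w) := by
    intro z w hw
    show ⟪Matrix.toEuclideanLin (Jmat n) _, Matrix.toEuclideanLin (Jmat n) w⟫
        = ⟪Matrix.toEuclideanLin (Jmat n) z, Matrix.toEuclideanLin (Jmat n) w⟫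
    rw [inner_J_J, inner_J_J, ← Submodule.starProjection_apply,
      Submodule.inner_starProjection_left_eq_right, Submodule.starProjection_eq_self_iff.mpr hw]
  constructor
  · -- Part 1
    ext z'
    simp only [sympDualIn, sympDual, Set.mem_setOf_eq, Set.mem_inter_iff, SetLike.mem_coe]
    constructor
    · rintro ⟨hG, h⟩
      refine ⟨fun z hz => ?_, hG⟩
      obtain ⟨w, hwF, rfl⟩ := Submodule.mem_map.mp hG
      have := h _ ⟨z, hz, rfl⟩
      rwa [key1 z w hwF] at this
    · rintro ⟨h, hG⟩
      refine ⟨hG, ?_⟩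
      rintro _ ⟨z, hz, rfl⟩
      obtain ⟨w, hwF, rfl⟩ := Submodule.mem_map.mp hG
      rw [key1 z w hwF]
      exact h z hz
  · -- Part 2
    have hΩ0 : (0 : PS n) ∈ Ω := interior_subset h0
    obtain ⟨ε, hε, hball⟩ : ∃ ε > 0, ball (0 : PS n) ε ⊆ Ω :=
      Metric.mem_nhds_iff.mp (mem_interior_iff_mem_nhds.mp h0)
    have hT0 : (0 : PS n) ∈ sympDual n ℏ Ω := by
      intro z hz
      show ⟪Matrix.toEuclideanLin (Jmat n) z, (0 : PS n)⟫ ≤ ℏ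
      rw [inner_zero_right]
      exact hℏ.le
    have hTconv : Convex ℝ (sympDual n ℏ Ω) := by
      intro w₁ h₁ w₂ h₂ a b ha hb hab z hz
      have e : symp n z (a • w₁ + b • w₂) = a * symp n z w₁ + b * symp n z w₂ := by
        show ⟪Matrix.toEuclideanLin (Jmat n) z, a • w₁ + b • w₂⟫ = _
        rw [inner_add_right, real_inner_smul_right, real_inner_smul_right]
        rfl
      show symp n z (a • w₁ + b • w₂) ≤ ℏ
      rw [e]
      nlinarith [h₁ z hz, h₂ z hz]
    have hTclosed : IsClosed (sympDual n ℏ Ω) := by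
      have hrw : sympDual n ℏ Ω
          = ⋂ z ∈ Ω, {w : PS n | ⟪Matrix.toEuclideanLin (Jmat n) z, w⟫ ≤ ℏ} := by
        ext w
        simp only [sympDual, Set.mem_setOf_eq, Set.mem_iInter]
        rfl
      rw [hrw]
      exact isClosed_biInter fun z _ =>
        isClosed_le (Continuous.inner continuous_const continuous_id) continuous_const
    have hTbdd : Bornology.IsBounded (sympDual n ℏ Ω) := by
      apply Bornology.IsBounded.subset (Metric.isBounded_closedBall (x := (0 : PS n)) (r := 2 * ℏ / ε))
      intro w hw
      simp only [Metric.mem_closedBall, dist_zero_right]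
      rcases eq_or_ne w 0 with rfl | hw0
      · simp only [norm_zero]
        positivity
      · have hwn : 0 < ‖w‖ := norm_pos_iff.mpr hw0
        set z : PS n := (ε / (2 * ‖w‖)) • (-(Matrix.toEuclideanLin (Jmat n) w)) with hz
        have hzΩ : z ∈ Ω := by
          apply hball
          rw [mem_ball_zero_iff, hz, norm_smul, norm_neg, norm_J, Real.norm_eq_abs,
            abs_of_pos (by positivity)]
          have : ε / (2 * ‖w‖) * ‖w‖ = ε / 2 := by field_simp
          rw [this]
          linarith
        have hle := hw z hzΩ
        have hJz : Matrix.toEuclideanLin (Jmat n) z = (ε / (2 * ‖w‖)) • w := by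
          rw [hz, _root_.map_smul, map_neg, J_J, neg_neg]
        have h1 : symp n z w = ε * ‖w‖ / 2 := by
          show ⟪Matrix.toEuclideanLin (Jmat n) z, w⟫ = _
          rw [hJz, real_inner_smul_left, real_inner_self_eq_norm_mul_norm]
          field_simp
        rw [h1] at hle
        rw [le_div_iff₀ hε]
        linarith
    have hTcpt : IsCompact (sympDual n ℏ Ω) :=
      Metric.isCompact_of_isClosed_isBounded hTclosed hTbdd
    ext z'
    simp only [sympDualIn, Set.mem_setOf_eq]
    constructor
    · rintro ⟨hG, h⟩
      by_contra hznot
      have hPcont : Continuous (fun w : PS n => (Submodule.orthogonalProjectionOnto G w : PS n)) :=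
        continuous_subtype_val.comp (Submodule.orthogonalProjectionOnto G).continuous
      have hPTcpt : IsCompact ((fun w : PS n =>
          (Submodule.orthogonalProjectionOnto G w : PS n)) '' sympDual n ℏ Ω) := hTcpt.image hPcont
      have hPTconv : Convex ℝ ((fun w : PS n =>
          (Submodule.orthogonalProjectionOnto G w : PS n)) '' sympDual n ℏ Ω) :=
        hTconv.linear_image (G.subtype.comp (Submodule.orthogonalProjectionOnto G).toLinearMap)
      obtain ⟨f, u, hfu, huf⟩ :=
        geometric_hahn_banach_closed_point hPTconv hPTcpt.isClosed hznot
      set d := (InnerProductSpace.toDual ℝ (PS n)).symm f with hd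
      have hdspec : ∀ x : PS n, ⟪d, x⟫ = f x := fun x => InnerProductSpace.toDual_symm_apply
      have hu0 : 0 < u := by
        have h0' := hfu _ ⟨0, hT0, rfl⟩
        simpa using h0'
      set c' : PS n := (Submodule.orthogonalProjectionOnto G d : PS n) with hc'
      have hc'G : c' ∈ G := SetLike.coe_mem _
      have hc'T : ∀ v ∈ sympDual n ℏ Ω, ⟪c', v⟫ < u := by
        intro v hv
        have hlt := hfu _ ⟨v, hv, rfl⟩
        rw [← hdspec] at hlt
        exact (Submodule.inner_starProjection_left_eq_right G d v).trans_lt hlt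
      have hc'z : u < ⟪c', z'⟫ := by
        have hself : (Submodule.orthogonalProjectionOnto G z' : PS n) = z' :=
          by rw [← Submodule.starProjection_apply]; exact Submodule.starProjection_eq_self_iff.mpr hG
        calc u < f z' := huf
          _ = ⟪d, z'⟫ := (hdspec z').symm
          _ = ⟪d, (Submodule.orthogonalProjectionOnto G z' : PS n)⟫ := by rw [hself]
          _ = ⟪c', z'⟫ := (Submodule.inner_starProjection_left_eq_right G d z').symm
      obtain ⟨b, hbF, hbJ⟩ := Submodule.mem_map.mp hc'G
      have hb0 : b ≠ 0 := by
        rintro rfl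
        rw [map_zero] at hbJ
        rw [← hbJ] at hc'z
        simp only [inner_zero_left] at hc'z
        linarith
      have hbn : 0 < ‖b‖ := norm_pos_iff.mpr hb0
      set S := {t : ℝ | 0 ≤ t ∧ t • b ∈ Ω} with hS
      have hS0 : (0 : ℝ) ∈ S := ⟨le_refl 0, by simpa using hΩ0⟩
      obtain ⟨R, hR⟩ := hc.isBounded.subset_closedBall 0
      have hSbdd : BddAbove S := by
        refine ⟨R / ‖b‖, fun t ht => ?_⟩
        have hmem := hR ht.2
        rw [Metric.mem_closedBall, dist_zero_right, norm_smul, Real.norm_eq_abs,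
          abs_of_nonneg ht.1] at hmem
        rw [le_div_iff₀ hbn]
        exact hmem
      have hSclosed : IsClosed S := by
        have hrw : S = Set.Ici (0 : ℝ) ∩ (fun t : ℝ => t • b) ⁻¹' Ω := by
          ext t
          simp [hS, Set.mem_Ici]
        rw [hrw]
        exact isClosed_Ici.inter (hc.isClosed.preimage (continuous_id.smul continuous_const))
      set t₀ := sSup S with ht₀
      have ht₀S : t₀ ∈ S := hSclosed.csSup_mem ⟨0, hS0⟩ hSbdd
      have ht₀pos : 0 < t₀ := by
        have hmem : ε / (2 * ‖b‖) ∈ S := by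
          refine ⟨by positivity, hball ?_⟩
          rw [mem_ball_zero_iff, norm_smul, Real.norm_eq_abs, abs_of_pos (by positivity)]
          have : ε / (2 * ‖b‖) * ‖b‖ = ε / 2 := by field_simp
          rw [this]
          linarith
        have h1 := le_csSup hSbdd hmem
        have h2 : 0 < ε / (2 * ‖b‖) := by positivity
        linarith
      set z₀ := t₀ • b with hz₀
      have hz₀Ω : z₀ ∈ Ω := ht₀S.2
      have hz₀F : z₀ ∈ F := F.smul_mem _ hbF
      have hz₀ni : z₀ ∉ interior Ω := by
        intro hmem
        obtain ⟨δ, hδ, hball'⟩ := Metric.mem_nhds_iff.mp (mem_interior_iff_mem_nhds.mp hmem)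
        have hs : (t₀ + δ / (2 * ‖b‖)) ∈ S := by
          refine ⟨add_nonneg ht₀S.1 (by positivity), hball' ?_⟩
          rw [mem_ball_iff_norm, hz₀, ← sub_smul, add_sub_cancel_left, norm_smul,
            Real.norm_eq_abs, abs_of_pos (by positivity)]
          have : δ / (2 * ‖b‖) * ‖b‖ = δ / 2 := by field_simp
          rw [this]
          linarith
        have h1 := le_csSup hSbdd hs
        have h2 : 0 < δ / (2 * ‖b‖) := by positivity
        linarith
      obtain ⟨g, hg⟩ := geometric_hahn_banach_open_point hconv.interior isOpen_interior hz₀ni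
      have hgz₀ : 0 < g z₀ := by
        have h00 := hg 0 h0
        rwa [map_zero] at h00
      have hgΩ : ∀ a ∈ Ω, g a ≤ g z₀ := by
        intro a ha
        by_contra hlt
        push_neg at hlt
        have hga : 0 < g a := lt_trans hgz₀ hlt
        set t : ℝ := (g z₀ + g a) / (2 * g a) with htdef
        have ht0 : 0 < t := by positivity
        have ht1 : t < 1 := by
          rw [htdef, div_lt_one (by positivity)]
          linarith
        have hmem : t • a ∈ interior Ω := by
          have := hconv.combo_interior_self_mem_interior h0 ha
            (a := 1 - t) (b := t) (by linarith) ht0.le (by ring)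
          simpa using this
        have hlt2 := hg _ hmem
        rw [g.map_smul, smul_eq_mul] at hlt2
        have heq : t * g a = (g z₀ + g a) / 2 := by
          rw [htdef]
          field_simp
        rw [heq] at hlt2
        linarith
      set e := (InnerProductSpace.toDual ℝ (PS n)).symm g with he
      have hespec : ∀ x : PS n, ⟪e, x⟫ = g x := fun x => InnerProductSpace.toDual_symm_apply
      set v := Matrix.toEuclideanLin (Jmat n) ((ℏ / g z₀) • e) with hv
      have hvT : v ∈ sympDual n ℏ Ω := by
        intro z hz
        show ⟪Matrix.toEuclideanLin (Jmat n) z, v⟫ ≤ ℏ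
        rw [hv, inner_J_J, real_inner_smul_right, real_inner_comm e z, hespec]
        calc ℏ / g z₀ * g z ≤ ℏ / g z₀ * g z₀ :=
              mul_le_mul_of_nonneg_left (hgΩ z hz) (by positivity)
          _ = ℏ := div_mul_cancel₀ _ (ne_of_gt hgz₀)
      have hgb : g b = g z₀ / t₀ := by
        have hh : g z₀ = t₀ * g b := by rw [hz₀, g.map_smul, smul_eq_mul]
        rw [hh]
        field_simp
      have hcv : ⟪c', v⟫ = ℏ / t₀ := by
        rw [← hbJ, hv, inner_J_J, real_inner_smul_right, real_inner_comm e b, hespec, hgb]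
        field_simp
      have hlt : ℏ / t₀ < u := hcv ▸ hc'T v hvT
      have hfin := h z₀ ⟨hz₀Ω, hz₀F⟩
      have hsymp : symp n z₀ z' = t₀ * ⟪c', z'⟫ := by
        show ⟪Matrix.toEuclideanLin (Jmat n) z₀, z'⟫ = _
        rw [hz₀, _root_.map_smul, real_inner_smul_left, hbJ]
      rw [hsymp] at hfin
      have h2 : ℏ < t₀ * u := by
        rw [div_lt_iff₀ ht₀pos] at hlt
        linarith
      have h3 : t₀ * u < t₀ * ⟪c', z'⟫ := mul_lt_mul_of_pos_left hc'z ht₀pos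
      linarith
    · rintro ⟨w, hw, rfl⟩
      refine ⟨SetLike.coe_mem _, ?_⟩
      rintro z ⟨hzΩ, hzF⟩
      have hJz : Matrix.toEuclideanLin (Jmat n) z ∈ G := Submodule.mem_map.mpr ⟨z, hzF, rfl⟩
      show ⟪Matrix.toEuclideanLin (Jmat n) z, (Submodule.orthogonalProjectionOnto G w : PS n)⟫ ≤ ℏ
      rw [← Submodule.starProjection_apply, ← Submodule.inner_starProjection_left_eq_right,
        Submodule.starProjection_eq_self_iff.mpr hJz]
      exact hw z hzΩ
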